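/- Let k be a field of characteristic 2 and r, s ∈ k. The k-algebra B = k[u², v², (1+sv²)u³ + (1+ru²)v³] ⊆ k[u,v] is isomorphic to k[a,b,c]/(c² + a³ + b³ + s²a³b² + r²a²b³) via a ↦ u², b ↦ v², c ↦ (1+sv²)u³ + (1+ru²)v³. -/

import Mathlib

set_option synthInstance.maxHeartbeats 1000000
set_option maxHeartbeats 2000000

open MvPolynomial

/-- expand as monomial map -/
lemma aux_expand_monomial {σ R : Type*} [CommSemiring R] (n : ℕ) (d : σ →₀ ℕ) (a : R) :
    expand (σ := σ) n (monomial d a) = monomial (n • d) a := by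
  rw [MvPolynomial.expand_monomial, MvPolynomial.monomial_eq]

lemma aux_expand_eq_zero {σ R : Type*} [CommSemiring R] [DecidableEq σ] {n : ℕ} (hn : n ≠ 0)
    {p : MvPolynomial σ R} (h : expand (σ := σ) n p = 0) : p = 0 := by
  have hsmul : ∀ v w : σ →₀ ℕ, n • v = n • w → v = w := by
    intro v w hvw
    ext i
    have := DFunLike.congr_fun hvw i
    simp only [Finsupp.smul_apply, smul_eq_mul] at this
    exact Nat.eq_of_mul_eq_mul_left (Nat.pos_of_ne_zero hn) this
  ext m
  have key : coeff (n • m) (expand (σ := σ) n p) = coeff m p := by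
    conv_lhs => rw [p.as_sum, map_sum]
    simp_rw [aux_expand_monomial, MvPolynomial.coeff_sum, MvPolynomial.coeff_monomial]
    rw [Finset.sum_congr rfl (fun v _ =>
      show (if n • v = n • m then coeff v p else 0) = (if v = m then coeff v p else 0) from by
      by_cases hv : v = m
      · simp [hv]
      · rw [if_neg hv, if_neg (fun hh => hv (hsmul v m hh))])]
    rw [Finset.sum_ite_eq' p.support m (fun v => coeff v p)]
    split_ifs with hm
    · rfl
    · exact (MvPolynomial.notMem_support_iff.mp hm).symm
  rw [h] at key
  simp only [coeff_zero] at key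
  simp [← key]

section Parity
variable {k : Type*} [Field k]

/-- All monomials of `q` have total degree satisfying `P`. -/
def HasParity (P : ℕ → Prop) (q : MvPolynomial (Fin 2) k) : Prop :=
  ∀ m ∈ q.support, P (m 0 + m 1)

lemma hasParity_add {P : ℕ → Prop} {q₁ q₂ : MvPolynomial (Fin 2) k}
    (h₁ : HasParity P q₁) (h₂ : HasParity P q₂) : HasParity P (q₁ + q₂) := by
  intro m hm
  rcases Finset.mem_union.mp (MvPolynomial.support_add hm) with h | h
  · exact h₁ m h
  · exact h₂ m h

lemma hasParity_monomial {P : ℕ → Prop} (d : Fin 2 →₀ ℕ) (a : k) (h : P (d 0 + d 1)) :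
    HasParity P (monomial d a) := by
  classical
  intro m hm
  rw [MvPolynomial.support_monomial] at hm
  split_ifs at hm with ha
  · simp at hm
  · rw [Finset.mem_singleton.mp hm]; exact h

lemma hasParity_mul_even_odd {q₁ q₂ : MvPolynomial (Fin 2) k}
    (h₁ : HasParity Even q₁) (h₂ : HasParity Odd q₂) : HasParity Odd (q₁ * q₂) := by
  intro m hm
  obtain ⟨m₁, hm₁, m₂, hm₂, rfl⟩ := Finset.mem_add.mp (MvPolynomial.support_mul _ _ hm)
  have : (m₁ + m₂) 0 + (m₁ + m₂) 1 = (m₁ 0 + m₁ 1) + (m₂ 0 + m₂ 1) := by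
    simp [Finsupp.add_apply]; ring
  rw [this]
  exact (h₁ m₁ hm₁).add_odd (h₂ m₂ hm₂)

lemma hasParity_zero {P : ℕ → Prop} : HasParity P (0 : MvPolynomial (Fin 2) k) := by
  intro m hm
  simp at hm

lemma hasParity_even_expand (q : MvPolynomial (Fin 2) k) :
    HasParity Even (expand (σ := Fin 2) 2 q) := by
  rw [q.as_sum, map_sum]
  refine Finset.sum_induction _ (HasParity Even) (fun a b => hasParity_add) hasParity_zero ?_
  intro v _
  rw [aux_expand_monomial]
  apply hasParity_monomial
  exact ⟨v 0 + v 1, by simp [Finsupp.smul_apply]; ring⟩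

lemma hasParity_eq_zero {q : MvPolynomial (Fin 2) k}
    (h₁ : HasParity Even q) (h₂ : HasParity Odd q) : q = 0 := by
  rw [← MvPolynomial.support_eq_empty]
  by_contra hne
  obtain ⟨m, hm⟩ := Finset.nonempty_of_ne_empty hne
  exact (Nat.not_odd_iff_even.mpr (h₁ m hm)) (h₂ m hm)

end Parity

section Key
variable {k : Type*} [Field k]

lemma hasParity_CXX {P : ℕ → Prop} (a : k) (i j : ℕ) (h : P (i + j)) :
    HasParity P (C a * X 0 ^ i * X 1 ^ j : MvPolynomial (Fin 2) k) := by
  have : (C a * X 0 ^ i * X 1 ^ j : MvPolynomial (Fin 2) k)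
      = monomial (Finsupp.single 0 i + Finsupp.single 1 j) a := by
    rw [MvPolynomial.X_pow_eq_monomial, MvPolynomial.X_pow_eq_monomial,
      show (C a : MvPolynomial (Fin 2) k) = monomial 0 a from MvPolynomial.C_apply,
      MvPolynomial.monomial_mul, MvPolynomial.monomial_mul]
    simp
  rw [this]
  apply hasParity_monomial
  simpa [Finsupp.single_apply] using h

lemma hasParity_odd_c (r s : k) :
    HasParity Odd ((1 + C s * X 1 ^ 2) * X 0 ^ 3 + (1 + C r * X 0 ^ 2) * X 1 ^ 3
      : MvPolynomial (Fin 2) k) := by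
  have hrw : ((1 + C s * X 1 ^ 2) * X 0 ^ 3 + (1 + C r * X 0 ^ 2) * X 1 ^ 3
      : MvPolynomial (Fin 2) k)
      = (C 1 * X 0 ^ 3 * X 1 ^ 0 + C s * X 0 ^ 3 * X 1 ^ 2)
        + (C 1 * X 0 ^ 0 * X 1 ^ 3 + C r * X 0 ^ 2 * X 1 ^ 3) := by
    simp only [MvPolynomial.C_1]; ring
  rw [hrw]
  exact hasParity_add
    (hasParity_add (hasParity_CXX 1 3 0 ⟨1, by ring⟩) (hasParity_CXX s 3 2 ⟨2, by ring⟩))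
    (hasParity_add (hasParity_CXX 1 0 3 ⟨1, by ring⟩) (hasParity_CXX r 2 3 ⟨2, by ring⟩))

lemma c_ne_zero (r s : k) :
    ((1 + C s * X 1 ^ 2) * X 0 ^ 3 + (1 + C r * X 0 ^ 2) * X 1 ^ 3
      : MvPolynomial (Fin 2) k) ≠ 0 := by
  intro h
  have := congrArg (MvPolynomial.eval ![1, 0]) h
  simp at this

lemma key_lemma (r s : k) {p₀ p₁ : MvPolynomial (Fin 2) k}
    (h : expand (σ := Fin 2) 2 p₀ + expand (σ := Fin 2) 2 p₁ *
      ((1 + C s * X 1 ^ 2) * X 0 ^ 3 + (1 + C r * X 0 ^ 2) * X 1 ^ 3) = 0) :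
    p₀ = 0 ∧ p₁ = 0 := by
  set c : MvPolynomial (Fin 2) k :=
    (1 + C s * X 1 ^ 2) * X 0 ^ 3 + (1 + C r * X 0 ^ 2) * X 1 ^ 3 with hc
  have heq : expand (σ := Fin 2) 2 p₀ = - (expand (σ := Fin 2) 2 p₁ * c) :=
    eq_neg_of_add_eq_zero_left h
  have hodd : HasParity Odd (expand (σ := Fin 2) 2 p₀) := by
    rw [heq]
    intro m hm
    rw [MvPolynomial.support_neg] at hm
    exact hasParity_mul_even_odd (hasParity_even_expand p₁) (hasParity_odd_c r s) m hm
  have h0 : expand (σ := Fin 2) 2 p₀ = 0 := hasParity_eq_zero (hasParity_even_expand p₀) hodd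
  have h1m : expand (σ := Fin 2) 2 p₁ * c = 0 := by
    rw [h0, zero_add] at h
    exact h
  have h1 : expand (σ := Fin 2) 2 p₁ = 0 :=
    (mul_eq_zero.mp h1m).resolve_right (c_ne_zero r s)
  exact ⟨aux_expand_eq_zero two_ne_zero h0, aux_expand_eq_zero two_ne_zero h1⟩

end Key

theorem stmt8 (k : Type*) [Field k] [CharP k 2] (r s : k) :
    RingHom.ker (aeval (R := k)
        ![(X 0 : MvPolynomial (Fin 2) k) ^ 2, (X 1) ^ 2,
          (1 + C s * (X 1) ^ 2) * (X 0) ^ 3 + (1 + C r * (X 0) ^ 2) * (X 1) ^ 3]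
        : MvPolynomial (Fin 3) k →ₐ[k] MvPolynomial (Fin 2) k).toRingHom
      = Ideal.span {(X 2 : MvPolynomial (Fin 3) k) ^ 2 + (X 0) ^ 3 + (X 1) ^ 3
          + C (s ^ 2) * (X 0) ^ 3 * (X 1) ^ 2 + C (r ^ 2) * (X 0) ^ 2 * (X 1) ^ 3} ∧
    (aeval (R := k)
        ![(X 0 : MvPolynomial (Fin 2) k) ^ 2, (X 1) ^ 2,
          (1 + C s * (X 1) ^ 2) * (X 0) ^ 3 + (1 + C r * (X 0) ^ 2) * (X 1) ^ 3]
        : MvPolynomial (Fin 3) k →ₐ[k] MvPolynomial (Fin 2) k).range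
      = Algebra.adjoin k
        ({(X 0 : MvPolynomial (Fin 2) k) ^ 2, (X 1) ^ 2,
          (1 + C s * (X 1) ^ 2) * (X 0) ^ 3 + (1 + C r * (X 0) ^ 2) * (X 1) ^ 3} :
          Set (MvPolynomial (Fin 2) k)) := by
  constructor
  · -- kernel
    set c : MvPolynomial (Fin 2) k := (1 + C s * (X 1) ^ 2) * (X 0) ^ 3 + (1 + C r * (X 0) ^ 2) * (X 1) ^ 3 with hcdef
    set f : MvPolynomial (Fin 3) k := X 2 ^ 2 + X 0 ^ 3 + X 1 ^ 3
      + C (s ^ 2) * X 0 ^ 3 * X 1 ^ 2 + C (r ^ 2) * X 0 ^ 2 * X 1 ^ 3 with hfdef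
    set g : MvPolynomial (Fin 2) k := X 0 ^ 3 + X 1 ^ 3 + C (s ^ 2) * X 0 ^ 3 * X 1 ^ 2
      + C (r ^ 2) * X 0 ^ 2 * X 1 ^ 3 with hgdef
    set F : Polynomial (MvPolynomial (Fin 2) k) := Polynomial.X ^ 2 + Polynomial.C g with hFdef
    set β : MvPolynomial (Fin 2) k →ₐ[k] MvPolynomial (Fin 2) k := expand 2 with hβ
    set ψ : Polynomial (MvPolynomial (Fin 2) k) →ₐ[k] MvPolynomial (Fin 2) k := Polynomial.aevalTower β c with hψ
    set E : MvPolynomial (Fin 3) k ≃ₐ[k] Polynomial (MvPolynomial (Fin 2) k) :=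
      (renameEquiv k (finRotate 3)).trans (MvPolynomial.finSuccEquiv k 2) with hE
    have hE0 : E (X 0) = Polynomial.C (X 0) := by
      rw [hE]
      simp only [AlgEquiv.trans_apply, renameEquiv_apply, rename_X]
      rw [show finRotate 3 0 = Fin.succ 0 from rfl, finSuccEquiv_X_succ]
    have hE1 : E (X 1) = Polynomial.C (X 1) := by
      rw [hE]
      simp only [AlgEquiv.trans_apply, renameEquiv_apply, rename_X]
      rw [show finRotate 3 1 = Fin.succ 1 from rfl, finSuccEquiv_X_succ]
    have hE2 : E (X 2) = Polynomial.X := by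
      rw [hE]
      simp only [AlgEquiv.trans_apply, renameEquiv_apply, rename_X]
      rw [show finRotate 3 2 = 0 from rfl, finSuccEquiv_X_zero]
    have hEC : ∀ a : k, E (C a) = Polynomial.C (C a) := by
      intro a
      rw [show (C a : MvPolynomial (Fin 3) k) = algebraMap k _ a from rfl, AlgEquiv.commutes]
      rfl
    have hcomp : ∀ p : MvPolynomial (Fin 3) k,
        aeval (R := k) ![(X 0 : MvPolynomial (Fin 2) k) ^ 2, (X 1) ^ 2, c] p = ψ (E p) := by
      intro p
      have : (aeval (R := k) ![(X 0 : MvPolynomial (Fin 2) k) ^ 2, (X 1) ^ 2, c]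
          : MvPolynomial (Fin 3) k →ₐ[k] MvPolynomial (Fin 2) k)
          = ψ.comp E.toAlgHom := by
        apply MvPolynomial.algHom_ext
        intro i
        fin_cases i
        · simp [hE0, hψ, hβ, MvPolynomial.expand_X]
        · simp [hE1, hψ, hβ, MvPolynomial.expand_X]
        · simp [hE2, hψ]
      rw [this]
      rfl
    have hEf : E f = F := by
      rw [hfdef, hFdef, hgdef]
      simp only [map_add, map_mul, map_pow, hE0, hE1, hE2, hEC, Polynomial.C_add,
        Polynomial.C_mul, Polynomial.C_pow]
      ring
    have h2 : (2 : MvPolynomial (Fin 2) k) = 0 := by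
      exact_mod_cast CharP.cast_eq_zero (MvPolynomial (Fin 2) k) 2
    have hψF : ψ F = 0 := by
      rw [hFdef]
      simp only [map_add, map_pow, Polynomial.aevalTower_X, Polynomial.aevalTower_C, hψ, hβ]
      rw [hgdef, hcdef]
      have hCs : (C (s ^ 2) : MvPolynomial (Fin 2) k) = C s ^ 2 := by rw [map_pow]
      have hCr : (C (r ^ 2) : MvPolynomial (Fin 2) k) = C r ^ 2 := by rw [map_pow]
      simp only [map_add, map_mul, map_pow, MvPolynomial.expand_X, map_one, expand_C, hCs, hCr]
      linear_combination (X 0 ^ 6 + X 1 ^ 6 + C s ^ 2 * X 0 ^ 6 * X 1 ^ 4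
        + C r ^ 2 * X 0 ^ 4 * X 1 ^ 6 + C s * X 1 ^ 2 * X 0 ^ 6 + C r * X 0 ^ 2 * X 1 ^ 6
        + (1 + C s * X 1 ^ 2) * (1 + C r * X 0 ^ 2) * X 0 ^ 3 * X 1 ^ 3 : MvPolynomial (Fin 2) k) * h2
    have hFmonic : F.Monic := Polynomial.monic_X_pow_add_C g (two_ne_zero)
    have hFdeg : F.degree = 2 := Polynomial.degree_X_pow_add_C (by norm_num) g
    ext p
    simp only [RingHom.mem_ker, AlgHom.toRingHom_eq_coe, RingHom.coe_coe]
    rw [hcomp p]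
    constructor
    · intro hp
      have hmod := Polynomial.modByMonic_add_div (E p) F
      have hdeg : ((E p) %ₘ F).degree ≤ 1 := by
        have h := Polynomial.degree_modByMonic_lt (E p) hFmonic
        rw [hFdeg] at h
        exact Order.lt_succ_iff.mp (by exact_mod_cast h)
      set Rm := (E p) %ₘ F with hRm
      have hR : Rm = Polynomial.C (Rm.coeff 1) * Polynomial.X + Polynomial.C (Rm.coeff 0) :=
        Polynomial.eq_X_add_C_of_degree_le_one hdeg
      have hψR : ψ Rm = 0 := by
        have h1 : ψ (E p) = ψ Rm + ψ F * ψ ((E p) /ₘ F) := by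
          rw [← map_mul, ← map_add, hmod]
        rw [hp, hψF, zero_mul, add_zero] at h1
        exact h1.symm
      have hRzero : Rm = 0 := by
        rw [hR] at hψR
        simp only [map_add, map_mul, Polynomial.aevalTower_C, Polynomial.aevalTower_X, hψ] at hψR
        have hk := key_lemma r s (p₀ := Rm.coeff 0) (p₁ := Rm.coeff 1)
          (by rw [add_comm]; exact hψR)
        rw [hR, hk.1, hk.2]
        simp
      rw [Ideal.mem_span_singleton']
      refine ⟨E.symm ((E p) /ₘ F), ?_⟩
      apply E.injective
      rw [map_mul, AlgEquiv.apply_symm_apply, hEf, mul_comm]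
      conv_rhs => rw [← hmod]
      rw [hRzero, zero_add]
    · intro hp
      rw [Ideal.mem_span_singleton'] at hp
      obtain ⟨q, hq⟩ := hp
      rw [← hq, map_mul, hEf, map_mul, hψF, mul_zero]
  · -- range
    rw [← Algebra.adjoin_range_eq_range_aeval]
    congr 1
    ext x
    simp only [Matrix.range_cons, Matrix.range_empty, Set.union_empty, Set.mem_insert_iff,
      Set.mem_singleton_iff, Set.mem_union]
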